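/- If F is a family of compact convex sets in the plane and there exist two non-parallel lines such that each of the four open quadrants they determine contains a member of F, then those four members form a C(4). -/
import Mathlib


open Set

noncomputable section

abbrev Plane := EuclideanSpace ℝ (Fin 2)

/-- A line in the plane: a point plus a nonzero direction. -/
def IsLine (L : Set Plane) : Prop :=
  ∃ p v : Plane, v ≠ 0 ∧ L = {x | ∃ t : ℝ, x = p + t • v}

/-- A `C(k)` family: `k` distinct sets such that the convex hulls of consecutive
unions are disjoint whenever the index pairs (mod `k`) are disjoint. -/
def IsCk (k : ℕ) [NeZero k] (F : Fin k → Set Plane) : Prop :=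
  Function.Injective F ∧
  ∀ i j : Fin k, Disjoint ({i, i + 1} : Finset (Fin k)) ({j, j + 1} : Finset (Fin k)) →
    convexHull ℝ (F i ∪ F (i + 1)) ∩ convexHull ℝ (F j ∪ F (j + 1)) = ∅

lemma sep_hulls (f : Plane →ₗ[ℝ] ℝ) (c : ℝ) (A B : Set Plane)
    (hA : ∀ x ∈ A, c < f x) (hB : ∀ x ∈ B, f x < c) :
    convexHull ℝ A ∩ convexHull ℝ B = ∅ := by
  apply Set.eq_empty_iff_forall_notMem.2
  rintro x ⟨hxA, hxB⟩
  have hA' : convexHull ℝ A ⊆ {y | c < f y} :=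
    convexHull_min hA (convex_halfSpace_gt f.isLinear c)
  have hB' : convexHull ℝ B ⊆ {y | f y < c} :=
    convexHull_min hB (convex_halfSpace_lt f.isLinear c)
  have := hA' hxA
  have := hB' hxB
  simp only [Set.mem_setOf_eq] at *
  linarith

/-- if each open quadrant of two non-parallel lines contains a compact
convex member of the family, those four members form a C(4). -/
theorem quadrants_give_c4 (g1 g2 : Plane →ₗ[ℝ] ℝ)
    (hindep : LinearIndependent ℝ ![g1, g2]) (c1 c2 : ℝ)
    (F1 F2 F3 F4 : Set Plane)
    (hne : F1.Nonempty ∧ F2.Nonempty ∧ F3.Nonempty ∧ F4.Nonempty)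
    (hcc : ∀ S ∈ ({F1, F2, F3, F4} : Set (Set Plane)), IsCompact S ∧ Convex ℝ S)
    (h1 : ∀ x ∈ F1, c1 < g1 x ∧ c2 < g2 x)
    (h2 : ∀ x ∈ F2, g1 x < c1 ∧ c2 < g2 x)
    (h3 : ∀ x ∈ F3, g1 x < c1 ∧ g2 x < c2)
    (h4 : ∀ x ∈ F4, c1 < g1 x ∧ g2 x < c2) :
    IsCk 4 ![F1, F2, F3, F4] := by
  obtain ⟨⟨x1, hx1⟩, ⟨x2, hx2⟩, ⟨x3, hx3⟩, ⟨x4, hx4⟩⟩ := hne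
  constructor
  · intro i j h
    fin_cases i <;> fin_cases j <;>
      simp only [Fin.zero_eta, Fin.mk_one, Fin.reduceFinMk, Fin.isValue,
        Matrix.cons_val_zero, Matrix.cons_val_one, Matrix.head_cons,
        Matrix.cons_val_two, Matrix.tail_cons, Matrix.cons_val_three] at h ⊢ <;>
      first
      | rfl
      | (exfalso
         first
         | (have a := h1 x1 hx1; have b := h2 x1 (h ▸ hx1); linarith [a.1, b.1])
         | (have a := h1 x1 hx1; have b := h3 x1 (h ▸ hx1); linarith [a.1, b.1])
         | (have a := h1 x1 hx1; have b := h4 x1 (h ▸ hx1); linarith [a.2, b.2])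
         | (have a := h2 x2 hx2; have b := h1 x2 (h ▸ hx2); linarith [a.1, b.1])
         | (have a := h2 x2 hx2; have b := h3 x2 (h ▸ hx2); linarith [a.2, b.2])
         | (have a := h2 x2 hx2; have b := h4 x2 (h ▸ hx2); linarith [a.1, b.1])
         | (have a := h3 x3 hx3; have b := h1 x3 (h ▸ hx3); linarith [a.1, b.1])
         | (have a := h3 x3 hx3; have b := h2 x3 (h ▸ hx3); linarith [a.2, b.2])
         | (have a := h3 x3 hx3; have b := h4 x3 (h ▸ hx3); linarith [a.1, b.1])
         | (have a := h4 x4 hx4; have b := h1 x4 (h ▸ hx4); linarith [a.2, b.2])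
         | (have a := h4 x4 hx4; have b := h2 x4 (h ▸ hx4); linarith [a.1, b.1])
         | (have a := h4 x4 hx4; have b := h3 x4 (h ▸ hx4); linarith [a.1, b.1]))
  · intro i j hdisj
    fin_cases i <;> fin_cases j <;>
      first
      | (exact absurd hdisj (by decide))
      | (simp only [Fin.isValue, Fin.mk_zero, Fin.mk_one, Fin.reduceAdd,
            Matrix.cons_val_zero, Matrix.cons_val_one, Matrix.head_cons,
            Matrix.cons_val_two, Matrix.tail_cons, Matrix.cons_val_three]
         first
         | (refine sep_hulls g2 c2 _ _ ?_ ?_ <;> rintro x (hx | hx) <;>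
             first | exact (h1 x hx).2 | exact (h2 x hx).2 | exact (h3 x hx).2 | exact (h4 x hx).2)
         | (refine sep_hulls g1 c1 _ _ ?_ ?_ <;> rintro x (hx | hx) <;>
             first | exact (h1 x hx).1 | exact (h2 x hx).1 | exact (h3 x hx).1 | exact (h4 x hx).1)
         | (rw [Set.inter_comm]
            refine sep_hulls g2 c2 _ _ ?_ ?_ <;> rintro x (hx | hx) <;>
             first | exact (h1 x hx).2 | exact (h2 x hx).2 | exact (h3 x hx).2 | exact (h4 x hx).2)
         | (rw [Set.inter_comm]
            refine sep_hulls g1 c1 _ _ ?_ ?_ <;> rintro x (hx | hx) <;>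
             first | exact (h1 x hx).1 | exact (h2 x hx).1 | exact (h3 x hx).1 | exact (h4 x hx).1)
         )
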